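/- The homomorphism φ is surjective: every matrix in GL(2,ℤ) is a finite product of copies of the four matrices [[-1,0],[0,-1]], [[1,0],[0,-1]], [[0,-1],[1,0]], and [[0,-1],[1,1]] (with the empty product being the identity matrix). -/

import Mathlib

/-- 2×2 integer matrices. -/
abbrev M2 := Matrix (Fin 2) (Fin 2) ℤ

/-- A matrix belongs to GL(2,ℤ), i.e. has determinant ±1. -/
def IsGL (A : M2) : Prop := A.det = 1 ∨ A.det = -1

/-- The four-letter alphabet Σ = {X, N, S, R}. -/
inductive Alph : Type | X | N | S | R
deriving DecidableEq

instance : Fintype Alph where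
  elems := {Alph.X, Alph.N, Alph.S, Alph.R}
  complete := fun x => by cases x <;> simp

/-- The matrices assigned to letters of Σ. -/
def phiLetter : Alph → M2
  | Alph.X => !![-1, 0; 0, -1]
  | Alph.N => !![1, 0; 0, -1]
  | Alph.S => !![0, -1; 1, 0]
  | Alph.R => !![0, -1; 1, 1]

/-- The monoid homomorphism φ : Σ* → GL(2,ℤ) (valued in matrices). -/
def phi (w : List Alph) : M2 := (w.map phiLetter).prod

/-- A word over Σ is canonical: no subword SS or RRR, the letter N occurs only in
the first position, and X occurs only in the first position or immediately after N. -/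
def Canonical (w : List Alph) : Prop :=
  ¬ [Alph.S, Alph.S] <:+: w ∧
  ¬ [Alph.R, Alph.R, Alph.R] <:+: w ∧
  (∀ i : Fin w.length, w.get i = Alph.N → (i : ℕ) = 0) ∧
  (∀ i : Fin w.length, w.get i = Alph.X →
      (i : ℕ) = 0 ∨ ((i : ℕ) = 1 ∧ w.get ⟨0, Nat.lt_of_le_of_lt (Nat.zero_le _) i.isLt⟩ = Alph.N))

/-- A subset of GL(2,ℤ) is regular if it is the image under φ of a regular language. -/
def RegularSubset (S : Set M2) : Prop :=
  ∃ L : Language Alph, L.IsRegular ∧ phi '' L = S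

-- The submonoid of `M2` generated by the four letter matrices.
def Mgen : Submonoid M2 := Submonoid.closure (Set.range phiLetter)

lemma phi_append (w₁ w₂ : List Alph) : phi (w₁ ++ w₂) = phi w₁ * phi w₂ := by
  simp [phi]

lemma mem_Mgen_word {A : M2} (hA : A ∈ Mgen) : ∃ w : List Alph, phi w = A := by
  induction hA using Submonoid.closure_induction with
  | mem x hx => obtain ⟨a, rfl⟩ := hx; exact ⟨[a], by simp [phi]⟩
  | one => exact ⟨[], by simp [phi]⟩
  | mul x y _ _ hx hy =>
      obtain ⟨w₁, rfl⟩ := hx; obtain ⟨w₂, rfl⟩ := hy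
      exact ⟨w₁ ++ w₂, phi_append w₁ w₂⟩

lemma letter_mem (a : Alph) : phiLetter a ∈ Mgen :=
  Submonoid.subset_closure ⟨a, rfl⟩

lemma X_mem : (!![-1, 0; 0, -1] : M2) ∈ Mgen := letter_mem Alph.X
lemma N_mem : (!![1, 0; 0, -1] : M2) ∈ Mgen := letter_mem Alph.N
lemma S_mem : (!![0, -1; 1, 0] : M2) ∈ Mgen := letter_mem Alph.S
lemma R_mem : (!![0, -1; 1, 1] : M2) ∈ Mgen := letter_mem Alph.R

lemma Sinv_mem : (!![0, 1; -1, 0] : M2) ∈ Mgen := by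
  have h : (!![0, 1; -1, 0] : M2)
      = !![0, -1; 1, 0] * !![0, -1; 1, 0] * !![0, -1; 1, 0] := by
    norm_num [Matrix.mul_fin_two]
  rw [h]; exact mul_mem (mul_mem S_mem S_mem) S_mem

lemma T_mem : (!![1, 1; 0, 1] : M2) ∈ Mgen := by
  have h : (!![1, 1; 0, 1] : M2) = !![0, 1; -1, 0] * !![0, -1; 1, 1] := by
    norm_num [Matrix.mul_fin_two]
  rw [h]; exact mul_mem Sinv_mem R_mem

lemma Tinv_mem : (!![1, -1; 0, 1] : M2) ∈ Mgen := by
  have h : (!![1, -1; 0, 1] : M2) = !![0, -1; 1, 1] * !![0, -1; 1, 1]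
      * !![0, -1; 1, 1] * !![0, -1; 1, 1] * !![0, -1; 1, 1] * !![0, -1; 1, 0] := by
    norm_num [Matrix.mul_fin_two]
  rw [h]
  exact mul_mem (mul_mem (mul_mem (mul_mem (mul_mem R_mem R_mem) R_mem) R_mem) R_mem) S_mem

lemma Tpow_mem (b : ℤ) : (!![1, b; 0, 1] : M2) ∈ Mgen := by
  induction b using Int.induction_on with
  | zero =>
      have : (!![1, (0:ℤ); 0, 1] : M2) = 1 := by
        rw [Matrix.one_fin_two]
      rw [this]; exact one_mem _
  | succ n ih =>
      have h : (!![1, ((n:ℤ)+1); 0, 1] : M2) = !![1, (n:ℤ); 0, 1] * !![1, 1; 0, 1] := by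
        ext i j
        fin_cases i <;> fin_cases j <;>
          simp [Matrix.mul_apply, Fin.sum_univ_two] <;> ring
      rw [h]; exact mul_mem ih T_mem
  | pred n ih =>
      have h : (!![1, (-(n:ℤ)-1); 0, 1] : M2) = !![1, (-(n:ℤ)); 0, 1] * !![1, -1; 0, 1] := by
        ext i j
        fin_cases i <;> fin_cases j <;>
          simp [Matrix.mul_apply, Fin.sum_univ_two] <;> ring
      rw [h]; exact mul_mem ih Tinv_mem

lemma natAbs_emod_lt (a c : ℤ) (hc : c ≠ 0) : (a % c).natAbs < c.natAbs := by
  rcases lt_or_gt_of_ne hc with h | h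
  · have h1 : 0 ≤ a % c := Int.emod_nonneg a hc
    have h2 : a % c < -c := by
      have := Int.emod_lt_of_pos a (b := -c) (by omega)
      rwa [Int.emod_neg] at this
    omega
  · have h1 : 0 ≤ a % c := Int.emod_nonneg a hc
    have h2 : a % c < c := Int.emod_lt_of_pos a h
    omega

lemma upper_mem (a b d : ℤ) (h : a * d = 1 ∨ a * d = -1) :
    (!![a, b; 0, d] : M2) ∈ Mgen := by
  have ha : a = 1 ∨ a = -1 := by
    rcases h with h | h
    · exact Int.isUnit_iff.mp (IsUnit.of_mul_eq_one (a := a) d h)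
    · exact Int.isUnit_iff.mp (IsUnit.of_mul_eq_one (a := a) (-d) (by linarith))
  rcases ha with rfl | rfl
  · rcases h with h | h
    · have hd : d = 1 := by linarith
      subst hd; exact Tpow_mem b
    · have hd : d = -1 := by linarith
      subst hd
      have he : (!![(1:ℤ), b; 0, -1] : M2) = !![1, 0; 0, -1] * !![1, b; 0, 1] := by
        ext i j
        fin_cases i <;> fin_cases j <;>
          simp [Matrix.mul_apply, Fin.sum_univ_two] <;> ring
      rw [he]; exact mul_mem N_mem (Tpow_mem b)
  · rcases h with h | h
    · have hd : d = -1 := by linarith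
      subst hd
      have he : (!![(-1:ℤ), b; 0, -1] : M2) = !![-1, 0; 0, -1] * !![1, -b; 0, 1] := by
        ext i j
        fin_cases i <;> fin_cases j <;>
          simp [Matrix.mul_apply, Fin.sum_univ_two] <;> ring
      rw [he]; exact mul_mem X_mem (Tpow_mem (-b))
    · have hd : d = 1 := by linarith
      subst hd
      have he : (!![(-1:ℤ), b; 0, 1] : M2)
          = !![-1, 0; 0, -1] * !![1, 0; 0, -1] * !![1, -b; 0, 1] := by
        ext i j
        fin_cases i <;> fin_cases j <;>
          simp [Matrix.mul_apply, Fin.sum_univ_two] <;> ring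
      rw [he]; exact mul_mem (mul_mem X_mem N_mem) (Tpow_mem (-b))

lemma isGL_mem : ∀ n : ℕ, ∀ A : M2, IsGL A → (A 1 0).natAbs = n → A ∈ Mgen := by
  intro n
  induction n using Nat.strong_induction_on with
  | _ n ih =>
    intro A hA hn
    obtain ⟨a, b, c, d, rfl⟩ : ∃ a b c d, A = !![a, b; c, d] :=
      ⟨_, _, _, _, Matrix.eta_fin_two A⟩
    have hn' : c.natAbs = n := by simpa using hn
    by_cases hc : c = 0
    · subst hc
      have h' : a * d = 1 ∨ a * d = -1 := by
        rcases hA with h | h <;> [left; right] <;>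
          (rw [Matrix.det_fin_two] at h; simp at h; linarith)
      exact upper_mem a b d h'
    · set B : M2 := !![-c, -d; a % c, b - a / c * d] with hB
      have hBc : (B 1 0).natAbs < n := by
        have := natAbs_emod_lt a c hc
        have hB10 : B 1 0 = a % c := by simp [hB]
        rw [hB10, ← hn']
        exact this
      have hBGL : IsGL B := by
        have hdet : B.det = Matrix.det !![a, b; c, d] := by
          rw [Matrix.det_fin_two, Matrix.det_fin_two]
          simp [hB]
          linear_combination d * Int.emod_add_mul_ediv a c
        rcases hA with h | h <;> [left; right] <;> rw [hdet] <;> exact h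
      have hBmem : B ∈ Mgen := ih _ hBc B hBGL rfl
      have hrec : (!![a, b; c, d] : M2) = !![1, a / c; 0, 1] * (!![0, 1; -1, 0] * B) := by
        ext i j
        fin_cases i <;> fin_cases j <;>
          simp [hB, Matrix.mul_apply, Fin.sum_univ_two]
        all_goals linear_combination (Int.emod_add_mul_ediv a c).symm
      rw [hrec]
      exact mul_mem (Tpow_mem _) (mul_mem Sinv_mem hBmem)

/-- φ is surjective onto GL(2,ℤ): every matrix of determinant ±1 is a finite product of the
four generator matrices. -/
theorem phi_surjective (A : M2) (hA : IsGL A) : ∃ w : List Alph, phi w = A := by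
  exact mem_Mgen_word (isGL_mem (A 1 0).natAbs A hA rfl)
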